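/- arXiv:2504.10207 — 7 statements merged into one kernel-verified Lean document; each statement's English description precedes it below -/
import Mathlib

section
/- The Zeckendorf representation is unique: if a₁F₁ + a₂F₂ + ⋯ + aₙFₙ = b₁F₁ + b₂F₂ + ⋯ + b_mF_m, where all digits aₖ, bₗ lie in {0,1}, the top digits satisfy aₙ = 1 and b_m = 1, and no two consecutive digits equal 1 (a_s·a_{s+1} = 0 for 1 ≤ s ≤ n−1 and b_s·b_{s+1} = 0 for 1 ≤ s ≤ m−1), then n = m and aₖ = bₖ for all k. -/
open Finset

lemma zeck_bound : ∀ N : ℕ, ∀ a : ℕ → ℕ,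
    (∀ k, 1 ≤ k → k ≤ N → a k ≤ 1) →
    (∀ s, 1 ≤ s → s ≤ N - 1 → a s * a (s+1) = 0) →
    ∑ k ∈ Icc 1 N, a k * Nat.fib (k+1) < Nat.fib (N+2) := by
  intro N
  induction N using Nat.strong_induction_on with
  | _ N ih =>
    intro a h01 hc
    match N with
    | 0 => simp
    | 1 =>
      have := h01 1 le_rfl le_rfl
      simp [Finset.Icc_self, show Nat.fib 2 = 1 from rfl, show Nat.fib 3 = 2 from rfl]
      omega
    | (N+2) =>
      rw [Finset.sum_Icc_succ_top (by omega : 1 ≤ N+2)]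
      rcases Nat.le_one_iff_eq_zero_or_eq_one.mp (h01 (N+2) (by omega) le_rfl) with h | h
      · rw [h]
        simp only [zero_mul, add_zero]
        calc ∑ k ∈ Icc 1 (N+1), a k * Nat.fib (k+1)
            < Nat.fib (N+3) := ih (N+1) (by omega) a
              (fun k h1 h2 => h01 k h1 (by omega))
              (fun s h1 h2 => hc s h1 (by omega))
          _ ≤ Nat.fib (N+4) := Nat.fib_le_fib_succ
      · have hz : a (N+1) = 0 := by
          have h1 := hc (N+1) (by omega) (by omega)
          rw [h] at h1
          omega
        rw [h, Finset.sum_Icc_succ_top (by omega : 1 ≤ N+1), hz]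
        simp only [zero_mul, add_zero, one_mul]
        have hb : ∑ k ∈ Icc 1 N, a k * Nat.fib (k+1) < Nat.fib (N+2) :=
          ih N (by omega) a (fun k h1 h2 => h01 k h1 (by omega))
            (fun s h1 h2 => hc s h1 (by omega))
        have e1 : Nat.fib (N+1+1+1) = Nat.fib (N+3) := rfl
        have e2 : Nat.fib (N+2+2) = Nat.fib (N+4) := rfl
        have : Nat.fib (N+4) = Nat.fib (N+2) + Nat.fib (N+3) := by
          rw [show N+4 = (N+2)+2 from rfl, Nat.fib_add_two]
        omega

lemma zeck_eq : ∀ N : ℕ, ∀ a b : ℕ → ℕ,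
    (∀ k, 1 ≤ k → k ≤ N → a k ≤ 1) →
    (∀ k, 1 ≤ k → k ≤ N → b k ≤ 1) →
    (∀ s, 1 ≤ s → s ≤ N - 1 → a s * a (s+1) = 0) →
    (∀ s, 1 ≤ s → s ≤ N - 1 → b s * b (s+1) = 0) →
    ∑ k ∈ Icc 1 N, a k * Nat.fib (k+1) = ∑ k ∈ Icc 1 N, b k * Nat.fib (k+1) →
    ∀ k, 1 ≤ k → k ≤ N → a k = b k := by
  intro N
  induction N with
  | zero => intro a b _ _ _ _ _ k hk hk'; omega
  | succ N ih =>
    intro a b ha hb hac hbc hsum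
    rw [Finset.sum_Icc_succ_top (by omega : 1 ≤ N+1),
        Finset.sum_Icc_succ_top (by omega : 1 ≤ N+1)] at hsum
    have bndA : ∑ k ∈ Icc 1 N, a k * Nat.fib (k+1) < Nat.fib (N+2) :=
      zeck_bound N a (fun k h1 h2 => ha k h1 (by omega))
        (fun s h1 h2 => hac s h1 (by omega))
    have bndB : ∑ k ∈ Icc 1 N, b k * Nat.fib (k+1) < Nat.fib (N+2) :=
      zeck_bound N b (fun k h1 h2 => hb k h1 (by omega))
        (fun s h1 h2 => hbc s h1 (by omega))
    have hE : Nat.fib (N+1+1) = Nat.fib (N+2) := rfl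
    have ha' := ha (N+1) (by omega) le_rfl
    have hb' := hb (N+1) (by omega) le_rfl
    have key : a (N+1) = b (N+1) := by
      rcases Nat.le_one_iff_eq_zero_or_eq_one.mp ha' with h1 | h1 <;>
        rcases Nat.le_one_iff_eq_zero_or_eq_one.mp hb' with h2 | h2 <;>
        rw [h1, h2] at hsum ⊢ <;> simp at hsum ⊢ <;> omega
    have hsum' : ∑ k ∈ Icc 1 N, a k * Nat.fib (k+1) =
        ∑ k ∈ Icc 1 N, b k * Nat.fib (k+1) := by
      rw [key] at hsum; omega
    have htail := ih a b (fun k h1 h2 => ha k h1 (by omega))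
      (fun k h1 h2 => hb k h1 (by omega))
      (fun s h1 h2 => hac s h1 (by omega))
      (fun s h1 h2 => hbc s h1 (by omega)) hsum'
    intro k hk1 hk2
    rcases Nat.lt_or_ge k (N+1) with h | h
    · exact htail k hk1 (by omega)
    · have : k = N+1 := by omega
      rw [this]; exact key

lemma zeck_aux (n m : ℕ) (a b : ℕ → ℕ) (hnm : n ≤ m) (hn : 1 ≤ n) (hm : 1 ≤ m)
    (ha01 : ∀ k : ℕ, 1 ≤ k → k ≤ n → a k ≤ 1)
    (hb01 : ∀ k : ℕ, 1 ≤ k → k ≤ m → b k ≤ 1)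
    (han : a n = 1) (hbm : b m = 1)
    (hac : ∀ s : ℕ, 1 ≤ s → s ≤ n - 1 → a s * a (s + 1) = 0)
    (hbc : ∀ s : ℕ, 1 ≤ s → s ≤ m - 1 → b s * b (s + 1) = 0)
    (hsum : ∑ k ∈ Finset.Icc 1 n, a k * Nat.fib (k + 1) =
            ∑ k ∈ Finset.Icc 1 m, b k * Nat.fib (k + 1)) :
    n = m ∧ ∀ k : ℕ, 1 ≤ k → k ≤ n → a k = b k := by
  set a' : ℕ → ℕ := fun k => if k ≤ n then a k else 0 with ha'def
  have hsum2 : ∑ k ∈ Icc 1 m, a' k * Nat.fib (k+1) =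
      ∑ k ∈ Icc 1 n, a k * Nat.fib (k+1) := by
    rw [← Finset.sum_subset (Finset.Icc_subset_Icc_right hnm)]
    · apply Finset.sum_congr rfl
      intro x hx
      simp only [Finset.mem_Icc] at hx
      simp [ha'def, hx.2]
    · intro x hx hnx
      simp only [Finset.mem_Icc] at hx hnx
      have : ¬ x ≤ n := by omega
      simp [ha'def, this]
  have key := zeck_eq m a' b
    (by intro k h1 h2; simp only [ha'def]; split
        · exact ha01 k h1 (by assumption)
        · omega)
    hb01
    (by intro s h1 h2
        simp only [ha'def]
        by_cases hs : s + 1 ≤ n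
        · simp only [if_pos (by omega : s ≤ n), if_pos hs]
          exact hac s h1 (by omega)
        · simp [hs])
    hbc
    (by rw [hsum2]; exact hsum)
  have hnm' : n = m := by
    by_contra h
    have hlt : n < m := by omega
    have := key m (by omega) le_rfl
    simp only [ha'def] at this
    rw [if_neg (by omega)] at this
    omega
  refine ⟨hnm', fun k h1 h2 => ?_⟩
  have := key k h1 (by omega)
  simpa [ha'def, if_pos h2] using this

/-- Zeckendorf uniqueness: if two representations
`a₁F₁ + ⋯ + aₙFₙ = b₁F₁ + ⋯ + b_mF_m` have digits in `{0,1}`, top digits equal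
to `1`, and no two consecutive digits equal to `1`, then `n = m` and the digits
coincide.  Here `Fₖ = Nat.fib (k+1)`, i.e. `F₀ = F₁ = 1`, `F₂ = 2`, `F₃ = 3`, …. -/
theorem zeckendorf_unique (n m : ℕ) (a b : ℕ → ℕ) (hn : 1 ≤ n) (hm : 1 ≤ m)
    (ha01 : ∀ k : ℕ, 1 ≤ k → k ≤ n → a k ≤ 1)
    (hb01 : ∀ k : ℕ, 1 ≤ k → k ≤ m → b k ≤ 1)
    (han : a n = 1) (hbm : b m = 1)
    (hac : ∀ s : ℕ, 1 ≤ s → s ≤ n - 1 → a s * a (s + 1) = 0)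
    (hbc : ∀ s : ℕ, 1 ≤ s → s ≤ m - 1 → b s * b (s + 1) = 0)
    (hsum : ∑ k ∈ Finset.Icc 1 n, a k * Nat.fib (k + 1) =
            ∑ k ∈ Finset.Icc 1 m, b k * Nat.fib (k + 1)) :
    n = m ∧ ∀ k : ℕ, 1 ≤ k → k ≤ n → a k = b k := by
  rcases le_total n m with h | h
  · exact zeck_aux n m a b h hn hm ha01 hb01 han hbm hac hbc hsum
  · obtain ⟨he, hd⟩ := zeck_aux m n b a h hm hn hb01 ha01 hbm han hbc hac hsum.symm
    exact ⟨he.symm, fun k h1 h2 => (hd k h1 (by omega)).symm⟩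
end

section
/- For every real number a ≥ 0 there exists a sequence (ᾱₖ)_{k≥1} with each ᾱₖ ∈ {0,1} such that for every natural number n ≥ 1 one has 0 ≤ a − ⌊a⌋ − Σ_{k=1}^{n} ᾱₖ/Fₖ < 1/Fₙ; consequently a = ⌊a⌋ + Σ_{k=1}^{∞} ᾱₖ/Fₖ. -/
open Finset

noncomputable def fibRem (x : ℝ) : ℕ → ℝ
  | 0 => x
  | n + 1 => if 1 / (Nat.fib (n + 2) : ℝ) ≤ fibRem x n
      then fibRem x n - 1 / (Nat.fib (n + 2) : ℝ) else fibRem x n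

noncomputable def fibDig (x : ℝ) (k : ℕ) : ℕ :=
  if 1 / (Nat.fib (k + 1) : ℝ) ≤ fibRem x (k - 1) then 1 else 0

lemma fibDig_le_one (x : ℝ) (k : ℕ) : fibDig x k ≤ 1 := by
  unfold fibDig; split <;> simp

lemma fibRem_eq (x : ℝ) (n : ℕ) :
    fibRem x n = x - ∑ k ∈ Icc 1 n, (fibDig x k : ℝ) / Nat.fib (k + 1) := by
  induction n with
  | zero => simp [fibRem]
  | succ n ih =>
      rw [Finset.sum_Icc_succ_top (by omega),
        show fibRem x (n + 1) = if 1 / (Nat.fib (n + 2) : ℝ) ≤ fibRem x n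
          then fibRem x n - 1 / (Nat.fib (n + 2) : ℝ) else fibRem x n from rfl]
      split <;> rename_i h
      · have hd : fibDig x (n + 1) = 1 := by
          unfold fibDig; norm_num; simpa [one_div] using h
        rw [hd, ih]; push_cast; ring
      · have hd : fibDig x (n + 1) = 0 := by
          push_neg at h; unfold fibDig; norm_num; simpa [one_div] using h
        rw [hd, ih]; push_cast; ring

lemma nat_le_fib (n : ℕ) : n ≤ Nat.fib (n + 1) := by
  induction n with
  | zero => simp
  | succ n ih =>
      rw [Nat.fib_add_two]
      rcases Nat.eq_zero_or_pos n with h | h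
      · simp [h]
      · have := Nat.fib_pos.mpr h
        omega

lemma fibRem_bounds (x : ℝ) (hx0 : 0 ≤ x) (hx1 : x < 1) (n : ℕ) :
    0 ≤ fibRem x n ∧ fibRem x n < 1 / Nat.fib (n + 1) := by
  induction n with
  | zero => simpa [fibRem] using ⟨hx0, hx1⟩
  | succ n ih =>
      obtain ⟨h0, h1⟩ := ih
      have hfpos : (0:ℝ) < Nat.fib (n + 1) := by
        exact_mod_cast Nat.fib_pos.mpr (by omega)
      have hfpos2 : (0:ℝ) < Nat.fib (n + 2) := by
        exact_mod_cast Nat.fib_pos.mpr (by omega)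
      rw [show fibRem x (n + 1) = if 1 / (Nat.fib (n + 2) : ℝ) ≤ fibRem x n
          then fibRem x n - 1 / (Nat.fib (n + 2) : ℝ) else fibRem x n from rfl,
        show n + 1 + 1 = n + 2 from rfl]
      split <;> rename_i h
      · constructor
        · linarith
        · -- fibRem x n - 1/F(n+2) < 1/F(n+1) - 1/F(n+2) ≤ 1/F(n+2)
          have hle : (Nat.fib (n + 2) : ℝ) ≤ 2 * Nat.fib (n + 1) := by
            have : Nat.fib (n + 2) ≤ 2 * Nat.fib (n + 1) := by
              rw [Nat.fib_add_two]
              have := Nat.fib_le_fib_succ (n := n)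
              omega
            exact_mod_cast this
          have key : 1 / (Nat.fib (n + 1) : ℝ) - 1 / Nat.fib (n + 2)
              ≤ 1 / Nat.fib (n + 2) := by
            rw [div_sub_div _ _ (ne_of_gt hfpos) (ne_of_gt hfpos2),
              div_le_div_iff₀ (by positivity) hfpos2]
            nlinarith
          linarith
      · push_neg at h
        exact ⟨h0, h⟩

/-- For every real `a ≥ 0` there is a sequence of digits `ᾱₖ ∈ {0,1}` such that
`0 ≤ a − ⌊a⌋ − Σ_{k=1}^n ᾱₖ/Fₖ < 1/Fₙ` for all `n ≥ 1`; consequently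
`a = ⌊a⌋ + Σ_{k=1}^∞ ᾱₖ/Fₖ`.  Here `Fₖ = Nat.fib (k+1)`, i.e. `F₀ = F₁ = 1`,
`F₂ = 2`, `F₃ = 3`, `F₄ = 5`, …. -/
theorem fib_series_representation_exists (a : ℝ) (ha : 0 ≤ a) :
    ∃ d : ℕ → ℕ,
      (∀ k : ℕ, 1 ≤ k → d k ≤ 1) ∧
      (∀ n : ℕ, 1 ≤ n →
        0 ≤ a - ⌊a⌋ - ∑ k ∈ Finset.Icc 1 n, (d k : ℝ) / Nat.fib (k + 1) ∧
        a - ⌊a⌋ - ∑ k ∈ Finset.Icc 1 n, (d k : ℝ) / Nat.fib (k + 1)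
          < 1 / Nat.fib (n + 1)) ∧
      HasSum (fun k : ℕ => (d (k + 1) : ℝ) / Nat.fib (k + 2)) (a - ⌊a⌋) := by
  set x : ℝ := a - ⌊a⌋ with hx
  have hx0 : 0 ≤ x := sub_nonneg.mpr (Int.floor_le a)
  have hx1 : x < 1 := by linarith [Int.lt_floor_add_one a]
  refine ⟨fibDig x, fun k _ => fibDig_le_one x k, fun n _ => ?_, ?_⟩
  · have := fibRem_bounds x hx0 hx1 n
    rw [fibRem_eq] at this
    exact this
  · have hnn : ∀ k : ℕ, 0 ≤ (fibDig x (k + 1) : ℝ) / Nat.fib (k + 2) := by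
      intro k; positivity
    rw [hasSum_iff_tendsto_nat_of_nonneg hnn]
    have hpart : ∀ n : ℕ,
        ∑ k ∈ Finset.range n, (fibDig x (k + 1) : ℝ) / Nat.fib (k + 2)
          = x - fibRem x n := by
      intro n
      rw [fibRem_eq, sub_sub_cancel]
      induction n with
      | zero => simp
      | succ m ihm =>
          rw [Finset.sum_range_succ, Finset.sum_Icc_succ_top (by omega), ihm]
    simp only [hpart]
    have hto : Filter.Tendsto (fun n => fibRem x n) Filter.atTop (nhds 0) := by
      apply squeeze_zero (fun n => (fibRem_bounds x hx0 hx1 n).1)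
        (fun n => le_of_lt (fibRem_bounds x hx0 hx1 n).2)
      have h1 : Filter.Tendsto (fun n : ℕ => (Nat.fib (n + 1) : ℝ))
          Filter.atTop Filter.atTop := by
        exact Filter.tendsto_atTop_mono
          (fun n => by exact_mod_cast nat_le_fib n) tendsto_natCast_atTop_atTop
      simpa [Pi.inv_def] using h1.inv_tendsto_atTop
    have := (tendsto_const_nhds (x := x) (f := Filter.atTop (α := ℕ))).sub hto
    simpa using this
end

section
/- For a real number a ≥ 0, the representation a = ⌊a⌋ + Σ_{k=1}^{∞} ᾱₖ/Fₖ with digits in {0,1} satisfying the remainder bounds is unique: if (ᾱₖ)_{k≥1} and (β̄ₖ)_{k≥1} are sequences with values in {0,1} such that for every n ≥ 1 both 0 ≤ a − ⌊a⌋ − Σ_{k=1}^{n} ᾱₖ/Fₖ < 1/Fₙ and 0 ≤ a − ⌊a⌋ − Σ_{k=1}^{n} β̄ₖ/Fₖ < 1/Fₙ hold, then ᾱₖ = β̄ₖ for all k ≥ 1. -/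
/-- Uniqueness of the Fibonacci expansion of a real `a ≥ 0`:
if `(ᾱₖ)` and `(β̄ₖ)` are `{0,1}`-valued digit sequences whose partial sums both
satisfy `0 ≤ a − ⌊a⌋ − Σ_{k=1}^n digitₖ/Fₖ < 1/Fₙ` for every `n ≥ 1`, then they
coincide.  Here `Fₖ = Nat.fib (k+1)`, i.e. `F₀ = F₁ = 1`, `F₂ = 2`, `F₃ = 3`, …. -/
theorem fib_series_representation_unique (a : ℝ) (ha : 0 ≤ a) (α β : ℕ → ℕ)
    (hα01 : ∀ k : ℕ, 1 ≤ k → α k ≤ 1)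
    (hβ01 : ∀ k : ℕ, 1 ≤ k → β k ≤ 1)
    (hα : ∀ n : ℕ, 1 ≤ n →
      0 ≤ a - ⌊a⌋ - ∑ k ∈ Finset.Icc 1 n, (α k : ℝ) / Nat.fib (k + 1) ∧
      a - ⌊a⌋ - ∑ k ∈ Finset.Icc 1 n, (α k : ℝ) / Nat.fib (k + 1)
        < 1 / Nat.fib (n + 1))
    (hβ : ∀ n : ℕ, 1 ≤ n →
      0 ≤ a - ⌊a⌋ - ∑ k ∈ Finset.Icc 1 n, (β k : ℝ) / Nat.fib (k + 1) ∧
      a - ⌊a⌋ - ∑ k ∈ Finset.Icc 1 n, (β k : ℝ) / Nat.fib (k + 1)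
        < 1 / Nat.fib (n + 1)) :
    ∀ k : ℕ, 1 ≤ k → α k = β k := by
  intro k hk
  induction k using Nat.strong_induction_on with
  | _ n IH =>
    have hF : (0:ℝ) < Nat.fib (n+1) := by
      exact_mod_cast Nat.fib_pos.mpr (Nat.succ_pos n)
    have hk := hk
    have hsplit : ∀ γ : ℕ → ℕ,
        ∑ k ∈ Finset.Icc 1 n, (γ k : ℝ) / Nat.fib (k + 1)
          = (∑ k ∈ Finset.Icc 1 (n-1), (γ k : ℝ) / Nat.fib (k + 1))
            + γ n / Nat.fib (n + 1) := by
      intro γ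
      have hn : n = (n-1) + 1 := (Nat.succ_pred_eq_of_pos hk).symm
      rw [hn, Finset.sum_Icc_succ_top (by omega : 1 ≤ (n-1)+1)]
      simp
    have hsum : ∑ k ∈ Finset.Icc 1 (n-1), (α k : ℝ) / Nat.fib (k + 1)
        = ∑ k ∈ Finset.Icc 1 (n-1), (β k : ℝ) / Nat.fib (k + 1) := by
      refine Finset.sum_congr rfl fun j hj => ?_
      obtain ⟨hj1, hj2⟩ := Finset.mem_Icc.mp hj
      rw [IH j (by omega) hj1]
    obtain ⟨ha1, ha2⟩ := hα n hk
    obtain ⟨hb1, hb2⟩ := hβ n hk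
    rw [hsplit α, hsum] at ha1 ha2
    rw [hsplit β] at hb1 hb2
    have h1 : (α n : ℝ) / Nat.fib (n+1) < (β n : ℝ) / Nat.fib (n+1) + 1 / Nat.fib (n+1) := by
      linarith
    have h2 : (β n : ℝ) / Nat.fib (n+1) < (α n : ℝ) / Nat.fib (n+1) + 1 / Nat.fib (n+1) := by
      linarith
    rw [← add_div] at h1 h2
    have h1' : (α n : ℝ) < (β n : ℝ) + 1 := by
      have := mul_lt_mul_of_pos_right h1 hF
      rwa [div_mul_cancel₀ _ hF.ne', div_mul_cancel₀ _ hF.ne'] at this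
    have h2' : (β n : ℝ) < (α n : ℝ) + 1 := by
      have := mul_lt_mul_of_pos_right h2 hF
      rwa [div_mul_cancel₀ _ hF.ne', div_mul_cancel₀ _ hF.ne'] at this
    have := (Nat.cast_lt (α := ℝ)).mp (by exact_mod_cast h1' : ((α n : ℝ) < ((β n + 1 : ℕ) : ℝ)))
    have := (Nat.cast_lt (α := ℝ)).mp (by exact_mod_cast h2' : ((β n : ℝ) < ((α n + 1 : ℕ) : ℝ)))
    omega
end

section
/- Let a ≥ 0 be a real number. Set x₀ = a − ⌊a⌋ and recursively define, for n ≥ 1, λ̄ₙ = ⌊(Fₙ/F_{n−1})·x_{n−1}⌋ and xₙ = (Fₙ/F_{n−1})·x_{n−1} − λ̄ₙ. Then for every n ≥ 1 the digit λ̄ₙ lies in {0,1}, 0 ≤ xₙ < 1, and the partial sum Aₙ = ⌊a⌋ + Σ_{k=1}^{n} λ̄ₖ/Fₖ satisfies a − Aₙ = xₙ/Fₙ, so that 0 ≤ a − Aₙ < 1/Fₙ. -/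
/-- The greedy Fibonacci digit recursion: for `a ≥ 0`, with `x₀ = a − ⌊a⌋`,
`λ̄ₙ = ⌊(Fₙ/F_{n−1})·x_{n−1}⌋` and `xₙ = (Fₙ/F_{n−1})·x_{n−1} − λ̄ₙ`, every digit
lies in `{0,1}`, `0 ≤ xₙ < 1`, and the partial sums `Aₙ = ⌊a⌋ + Σ_{k=1}^n λ̄ₖ/Fₖ`
satisfy `a − Aₙ = xₙ/Fₙ`, hence `0 ≤ a − Aₙ < 1/Fₙ`.
Here `Fₖ = Nat.fib (k+1)`, i.e. `F₀ = F₁ = 1`, `F₂ = 2`, `F₃ = 3`, `F₄ = 5`, …. -/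
theorem fib_greedy_recursion (a : ℝ) (ha : 0 ≤ a) (x : ℕ → ℝ) (lam : ℕ → ℤ)
    (hx0 : x 0 = a - ⌊a⌋)
    (hlam : ∀ n : ℕ, 1 ≤ n →
      lam n = ⌊(Nat.fib (n + 1) : ℝ) / Nat.fib n * x (n - 1)⌋)
    (hx : ∀ n : ℕ, 1 ≤ n →
      x n = (Nat.fib (n + 1) : ℝ) / Nat.fib n * x (n - 1) - lam n) :
    ∀ n : ℕ, 1 ≤ n →
      (lam n = 0 ∨ lam n = 1) ∧
      (0 ≤ x n ∧ x n < 1) ∧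
      a - (⌊a⌋ + ∑ k ∈ Finset.Icc 1 n, (lam k : ℝ) / Nat.fib (k + 1))
        = x n / Nat.fib (n + 1) ∧
      (0 ≤ a - (⌊a⌋ + ∑ k ∈ Finset.Icc 1 n, (lam k : ℝ) / Nat.fib (k + 1)) ∧
       a - (⌊a⌋ + ∑ k ∈ Finset.Icc 1 n, (lam k : ℝ) / Nat.fib (k + 1))
         < 1 / Nat.fib (n + 1)) := by
  have key : ∀ n : ℕ, (0 ≤ x n ∧ x n < 1) ∧
      a - (⌊a⌋ + ∑ k ∈ Finset.Icc 1 n, (lam k : ℝ) / Nat.fib (k + 1))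
        = x n / Nat.fib (n + 1) ∧
      (1 ≤ n → (lam n = 0 ∨ lam n = 1)) := by
    intro n
    induction n with
    | zero =>
      have h1 : (0:ℝ) ≤ a - ⌊a⌋ := by
        have := Int.floor_le a; linarith
      have h2 : a - ⌊a⌋ < 1 := by
        have := Int.lt_floor_add_one a; linarith
      refine ⟨⟨by rw [hx0]; exact h1, by rw [hx0]; exact h2⟩, ?_, by omega⟩
      simp [hx0]
    | succ n ih =>
      obtain ⟨⟨hx0n, hx1n⟩, hAn, _⟩ := ih
      have hfib1 : (0:ℝ) < Nat.fib (n + 1) := by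
        exact_mod_cast Nat.fib_pos.mpr (Nat.succ_pos n)
      have hfib2 : (0:ℝ) < Nat.fib (n + 2) := by
        exact_mod_cast Nat.fib_pos.mpr (by omega)
      have hratio : (Nat.fib (n + 2) : ℝ) / Nat.fib (n + 1) ≤ 2 := by
        rw [div_le_iff₀ hfib1]
        have : Nat.fib (n + 2) ≤ 2 * Nat.fib (n + 1) := by
          rw [Nat.fib_add_two, two_mul]
          exact add_le_add_left (Nat.fib_le_fib_succ) _
        exact_mod_cast this
      have hrnn : (0:ℝ) ≤ (Nat.fib (n + 2) : ℝ) / Nat.fib (n + 1) :=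
        le_of_lt (div_pos hfib2 hfib1)
      set y : ℝ := (Nat.fib (n + 2) : ℝ) / Nat.fib (n + 1) * x n with hy
      have hy0 : 0 ≤ y := mul_nonneg hrnn hx0n
      have hy2 : y < 2 := by
        calc y < (Nat.fib (n + 2) : ℝ) / Nat.fib (n + 1) * 1 :=
                mul_lt_mul_of_pos_left hx1n (div_pos hfib2 hfib1)
          _ ≤ 2 := by rwa [mul_one]
      have hlamn : lam (n + 1) = ⌊y⌋ := by
        have := hlam (n + 1) (by omega)
        simpa using this
      have hxn : x (n + 1) = y - lam (n + 1) := by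
        have := hx (n + 1) (by omega)
        simpa [hy] using this
      have hdig : lam (n + 1) = 0 ∨ lam (n + 1) = 1 := by
        rw [hlamn]
        have h1 : 0 ≤ ⌊y⌋ := Int.floor_nonneg.mpr hy0
        have h2 : ⌊y⌋ < 2 := by
          have := Int.floor_le y
          exact_mod_cast Int.floor_lt.mpr (by exact_mod_cast hy2)
        omega
      have hxb : 0 ≤ x (n + 1) ∧ x (n + 1) < 1 := by
        rw [hxn, hlamn]
        constructor
        · have := Int.floor_le y; linarith
        · have := Int.lt_floor_add_one y; linarith
      refine ⟨hxb, ?_, fun _ => hdig⟩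
      rw [Finset.sum_Icc_succ_top (by omega : 1 ≤ n + 1)]
      have : a - (⌊a⌋ + (∑ k ∈ Finset.Icc 1 n, (lam k : ℝ) / Nat.fib (k + 1)
          + (lam (n+1) : ℝ) / Nat.fib (n + 1 + 1)))
          = x n / Nat.fib (n + 1) - (lam (n+1) : ℝ) / Nat.fib (n + 2) := by
        rw [← hAn]; simp only [show n + 1 + 1 = n + 2 from rfl]; ring
      rw [this, hxn, hy]
      field_simp
  intro n hn
  obtain ⟨hxb, hA, hdig⟩ := key n
  have hfib : (0:ℝ) < Nat.fib (n + 1) := by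
    exact_mod_cast Nat.fib_pos.mpr (by omega)
  refine ⟨hdig hn, hxb, hA, ?_, ?_⟩
  · rw [hA]; exact div_nonneg hxb.1 (le_of_lt hfib)
  · rw [hA]; gcongr
    exact hxb.2
end

section
/- Let k > 1 be an integer. Then the infinite series Σ_{n=1}^{∞} 1/(Fₙ·F_{n+2k}) converges and equals (1/F_{2k}) · Σ_{n=1}^{k} 1/(F_{2n−1}·F_{2n}). -/
open Finset Filter Topology

private lemma fib_key (j n : ℕ) :
    Nat.fib (2*j+1) * Nat.fib (n+2*j) = Nat.fib (2*j) * Nat.fib (n+2*j+1) + Nat.fib n := by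
  induction j with
  | zero => simp
  | succ j ih =>
    have ha : Nat.fib (2*j+2) = Nat.fib (2*j) + Nat.fib (2*j+1) := Nat.fib_add_two
    have hb : Nat.fib (2*j+3) = Nat.fib (2*j+1) + Nat.fib (2*j+2) := Nat.fib_add_two
    have hc : Nat.fib (n+2*j+2) = Nat.fib (n+2*j) + Nat.fib (n+2*j+1) := Nat.fib_add_two
    have hd : Nat.fib (n+2*j+3) = Nat.fib (n+2*j+1) + Nat.fib (n+2*j+2) := Nat.fib_add_two
    have e1 : 2*(j+1)+1 = 2*j+3 := by ring
    have e2 : n+2*(j+1) = n+2*j+2 := by ring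
    have e3 : 2*(j+1) = 2*j+2 := by ring
    have e4 : n+2*j+2+1 = n+2*j+3 := by omega
    rw [e1, e2, e3, e4, hb, hd, hc, ha]
    nlinarith [ih]

private lemma fib_key2 (j n : ℕ) :
    Nat.fib (2*j+2) * Nat.fib (n+2*j+1) = Nat.fib (2*j) * Nat.fib (n+2*j+3) + Nat.fib (n+1) := by
  have h := fib_key j (n+1)
  have ha : Nat.fib (2*j+2) = Nat.fib (2*j) + Nat.fib (2*j+1) := Nat.fib_add_two
  have hd : Nat.fib (n+2*j+3) = Nat.fib (n+2*j+1) + Nat.fib (n+2*j+2) := Nat.fib_add_two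
  have e : n+1+2*j = n+2*j+1 := by ring
  have e' : n+2*j+1+1 = n+2*j+2 := by omega
  rw [e, e'] at h
  nlinarith [h]

private lemma fibR_pos (m : ℕ) (hm : 0 < m) : (0:ℝ) < Nat.fib m := by
  exact_mod_cast Nat.fib_pos.2 hm

private lemma fib_frac (k n : ℕ) :
    (Nat.fib (2*k) : ℝ) / (Nat.fib (n+1) * Nat.fib (n+2*k+1)) =
      ∑ i ∈ range k, 1 / ((Nat.fib (n+2*i+1) : ℝ) * Nat.fib (n+2*i+3)) := by
  induction k with
  | zero => simp
  | succ k ih =>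
    rw [sum_range_succ, ← ih]
    have h1 := fibR_pos (n+1) (by omega)
    have h2 := fibR_pos (n+2*k+1) (by omega)
    have h3 := fibR_pos (n+2*k+3) (by omega)
    have e1 : 2*(k+1) = 2*k+2 := by ring
    have e2 : n+2*(k+1)+1 = n+2*k+3 := by ring
    have e3 : n+2*k+1 = n+2*k+1 := rfl
    have e2' : n+(2*k+2)+1 = n+2*k+3 := by omega
    rw [e1, e2']
    have key : (Nat.fib (2*k+2) : ℝ) * Nat.fib (n+2*k+1)
        = Nat.fib (2*k) * Nat.fib (n+2*k+3) + Nat.fib (n+1) := by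
      exact_mod_cast congrArg (Nat.cast : ℕ → ℝ) (fib_key2 k n)
    field_simp
    linear_combination key

private noncomputable def bb (j : ℕ) : ℝ := 1 / ((Nat.fib j : ℝ) * Nat.fib (j+1))

private lemma bb_nonneg (j : ℕ) : 0 ≤ bb j := by
  unfold bb; positivity

private lemma bb_anti (j : ℕ) (hj : 1 ≤ j) : bb (j+1) ≤ bb j := by
  unfold bb
  have p1 := fibR_pos j hj
  have p2 := fibR_pos (j+1) (by omega)
  apply one_div_le_one_div_of_le (by positivity)
  have m1 : (Nat.fib j : ℝ) ≤ Nat.fib (j+1) := by exact_mod_cast Nat.fib_le_fib_succ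
  have m2 : (Nat.fib (j+1) : ℝ) ≤ Nat.fib (j+2) := by exact_mod_cast Nat.fib_le_fib_succ
  nlinarith

private lemma bb_tendsto (c : ℕ) (hc : 1 ≤ c) :
    Filter.Tendsto (fun n : ℕ => bb (n + c)) Filter.atTop (nhds 0) := by
  apply squeeze_zero (fun n => bb_nonneg _) (g := fun n : ℕ => 1 / ((n : ℝ) + 1))
  · intro n
    unfold bb
    have hnat : (n + 1 : ℕ) ≤ Nat.fib (n+c) * Nat.fib (n+c+1) := by
      have h1 : 1 ≤ Nat.fib (n+c) := Nat.fib_pos.2 (by omega)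
      have h2 : n + c + 1 ≤ Nat.fib (n+c+1) + 1 := Nat.le_fib_add_one (n+c+1)
      nlinarith
    have hcast : (n + 1 : ℝ) ≤ (Nat.fib (n+c) : ℝ) * Nat.fib (n+c+1) := by
      exact_mod_cast hnat
    exact one_div_le_one_div_of_le (by positivity) hcast
  · exact tendsto_one_div_add_atTop_nhds_zero_nat

private lemma hasSum_bb (c : ℕ) (hc : 1 ≤ c) :
    HasSum (fun n : ℕ => bb (n + c) - bb (n + 1 + c)) (bb c) := by
  have hnn : ∀ n : ℕ, 0 ≤ bb (n + c) - bb (n + 1 + c) := by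
    intro n
    have := bb_anti (n + c) (by omega)
    have e : n + 1 + c = (n + c) + 1 := by omega
    rw [e]
    linarith
  rw [hasSum_iff_tendsto_nat_of_nonneg hnn]
  have hps : ∀ N : ℕ, ∑ n ∈ Finset.range N, (bb (n + c) - bb (n + 1 + c)) = bb c - bb (N + c) := by
    intro N
    have := Finset.sum_range_sub' (f := fun n => bb (n + c)) N
    simpa using this
  simp only [hps]
  have := (bb_tendsto c hc)
  simpa using (tendsto_const_nhds (x := bb c)).sub this

/-- For an integer `k > 1`, the series `Σ_{n=1}^∞ 1/(Fₙ·F_{n+2k})` converges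
and equals `(1/F_{2k}) · Σ_{n=1}^k 1/(F_{2n−1}·F_{2n})`, where `Fₙ = Nat.fib n`. -/
theorem fib_reciprocal_series (k : ℕ) (hk : 1 < k) :
    HasSum (fun n : ℕ => (1 : ℝ) / (Nat.fib (n + 1) * Nat.fib (n + 1 + 2 * k)))
      ((1 / Nat.fib (2 * k)) *
        ∑ n ∈ Finset.Icc 1 k, (1 : ℝ) / (Nat.fib (2 * n - 1) * Nat.fib (2 * n))) := by
  have hF2k := fibR_pos (2*k) (by omega)
  have H : ∀ i ∈ range k, HasSum (fun n : ℕ => bb (n + (2*i+1)) - bb (n + 1 + (2*i+1)))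
      (bb (2*i+1)) := fun i _ => hasSum_bb (2*i+1) (by omega)
  have Hm := (hasSum_sum H).mul_left (1 / (Nat.fib (2*k) : ℝ))
  have hfun : (fun n : ℕ => (1 / (Nat.fib (2*k) : ℝ)) *
        ∑ i ∈ range k, (bb (n + (2*i+1)) - bb (n + 1 + (2*i+1))))
      = fun n : ℕ => (1 : ℝ) / (Nat.fib (n + 1) * Nat.fib (n + 1 + 2 * k)) := by
    funext n
    have hsum_eq : ∑ i ∈ range k, (bb (n + (2*i+1)) - bb (n + 1 + (2*i+1)))
        = ∑ i ∈ range k, 1 / ((Nat.fib (n+2*i+1) : ℝ) * Nat.fib (n+2*i+3)) := by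
      refine Finset.sum_congr rfl fun i _ => ?_
      have e1 : n + (2*i+1) = n+2*i+1 := by omega
      have e2 : n + 1 + (2*i+1) = n+2*i+2 := by omega
      rw [e1, e2]
      unfold bb
      have e3 : n+2*i+1+1 = n+2*i+2 := by omega
      have e4 : n+2*i+2+1 = n+2*i+3 := by omega
      rw [e3, e4]
      have p1 := fibR_pos (n+2*i+1) (by omega)
      have p2 := fibR_pos (n+2*i+2) (by omega)
      have p3 := fibR_pos (n+2*i+3) (by omega)
      have hrec : (Nat.fib (n+2*i+3) : ℝ) = Nat.fib (n+2*i+1) + Nat.fib (n+2*i+2) := by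
        exact_mod_cast congrArg (Nat.cast : ℕ → ℝ) (Nat.fib_add_two (n := n+2*i+1))
      rw [hrec]
      field_simp
      ring
    rw [hsum_eq, ← fib_frac k n]
    have e5 : n + 1 + 2*k = n + 2*k + 1 := by omega
    rw [e5]
    field_simp
  have hval : ∑ n ∈ Finset.Icc 1 k, (1:ℝ) / (Nat.fib (2*n-1) * Nat.fib (2*n))
      = ∑ i ∈ range k, bb (2*i+1) := by
    rw [← Finset.Ico_add_one_right_eq_Icc, Finset.sum_Ico_eq_sum_range]
    refine Finset.sum_congr (by simp) fun i _ => ?_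
    have e1 : 2*(1+i)-1 = 2*i+1 := by omega
    have e2 : 2*(1+i) = 2*i+1+1 := by omega
    rw [e1, e2]
    unfold bb
    rfl
  rw [hval, ← hfun]
  exact Hm
end

section
/- The following two convergent series of real numbers are equal: 2·Σ_{n=1}^{∞} 1/(F_{3n}·φ^{3n}) = 4·Σ_{n=1}^{∞} 1/(F_{6n−3}·F_{6n}), where φ = (1 + √5)/2 is the golden ratio. -/
open Real goldenRatio

private lemma gold_cube' : ((1 + √5) / 2 : ℝ) ^ 3 = 2 + √5 := by
  have h5 : √5 ^ 2 = 5 := Real.sq_sqrt (by norm_num)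
  linear_combination ((3 + √5)/8) * h5

private lemma fib_gold_key (k : ℕ) :
    (1:ℝ) / (Nat.fib (6*k+3) * ((1 + √5) / 2) ^ (6*k+3))
      + 1 / (Nat.fib (6*k+6) * ((1 + √5) / 2) ^ (6*k+6))
      = 2 * (1 / (Nat.fib (6*k+3) * Nat.fib (6*k+6))) := by
  have h5 : √5 ^ 2 = 5 := Real.sq_sqrt (by norm_num)
  have s5pos : (0:ℝ) < √5 := Real.sqrt_pos.mpr (by norm_num)
  have hapos : (0:ℝ) < φ ^ (6*k+3) := pow_pos goldenRatio_pos _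
  have hbpos : (0:ℝ) < φ ^ (6*k+6) := pow_pos goldenRatio_pos _
  have hpsi1 : φ ^ (6*k+3) * ψ ^ (6*k+3) = -1 := by
    rw [← mul_pow, goldenRatio_mul_goldenConj, Odd.neg_one_pow ⟨3*k+1, by ring⟩]
  have hpsi2 : φ ^ (6*k+6) * ψ ^ (6*k+6) = 1 := by
    rw [← mul_pow, goldenRatio_mul_goldenConj, Even.neg_one_pow ⟨3*k+3, by ring⟩]
  have hcc : φ ^ (6*k+6) = φ ^ (6*k+3) * (2 + √5) := by
    rw [← gold_cube', ← pow_add]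
  have hB1 : (Nat.fib (6*k+3) : ℝ) = (φ ^ (6*k+3) - ψ ^ (6*k+3)) / √5 :=
    Real.coe_fib_eq _
  have hB2 : (Nat.fib (6*k+6) : ℝ) = (φ ^ (6*k+6) - ψ ^ (6*k+6)) / √5 :=
    Real.coe_fib_eq _
  have hF1pos : (0:ℝ) < Nat.fib (6*k+3) := by
    exact_mod_cast Nat.fib_pos.mpr (by omega)
  have hF2pos : (0:ℝ) < Nat.fib (6*k+6) := by
    exact_mod_cast Nat.fib_pos.mpr (by omega)
  show (1:ℝ) / (Nat.fib (6*k+3) * φ ^ (6*k+3))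
      + 1 / (Nat.fib (6*k+6) * φ ^ (6*k+6))
      = 2 * (1 / (Nat.fib (6*k+3) * Nat.fib (6*k+6)))
  generalize hF1g : (Nat.fib (6*k+3) : ℝ) = F1 at *
  generalize hF2g : (Nat.fib (6*k+6) : ℝ) = F2 at *
  generalize hag : (φ : ℝ) ^ (6*k+3) = a at *
  generalize hbg : (φ : ℝ) ^ (6*k+6) = b at *
  generalize hag' : (ψ : ℝ) ^ (6*k+3) = a' at *
  generalize hbg' : (ψ : ℝ) ^ (6*k+6) = b' at *
  have e1 : F1 * √5 = a - a' := by rw [hB1]; field_simp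
  have e2 : F2 * √5 = b - b' := by rw [hB2]; field_simp
  have hF1' : F1 * a * √5 = a ^ 2 + 1 := by linear_combination a * e1 - hpsi1
  have hF2' : F2 * b * √5 = b ^ 2 - 1 := by linear_combination b * e2 - hpsi2
  have hmain : F2 * b + F1 * a = 2 * a * b := by
    have h : (F2 * b + F1 * a) * √5 = 2 * a * b * √5 := by
      linear_combination hF2' + hF1' + (b + a * (2 + √5) - 2 * a * √5) * hcc
        + (-(a^2)) * h5
    exact mul_right_cancel₀ (ne_of_gt s5pos) h
  field_simp
  linear_combination hmain

/-- The two convergent series `2·Σ_{n=1}^∞ 1/(F_{3n}·φ^{3n})` and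
`4·Σ_{n=1}^∞ 1/(F_{6n−3}·F_{6n})` are equal, where `Fₙ = Nat.fib n` and
`φ = (1 + √5)/2` is the golden ratio. -/
theorem fib_goldenRatio_series_eq :
    Summable (fun n : ℕ =>
      (1 : ℝ) / (Nat.fib (3 * (n + 1)) * ((1 + Real.sqrt 5) / 2) ^ (3 * (n + 1)))) ∧
    Summable (fun n : ℕ =>
      (1 : ℝ) / (Nat.fib (6 * (n + 1) - 3) * Nat.fib (6 * (n + 1)))) ∧
    2 * ∑' n : ℕ,
        (1 : ℝ) / (Nat.fib (3 * (n + 1)) * ((1 + Real.sqrt 5) / 2) ^ (3 * (n + 1)))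
      = 4 * ∑' n : ℕ,
        (1 : ℝ) / (Nat.fib (6 * (n + 1) - 3) * Nat.fib (6 * (n + 1))) := by
  set t : ℕ → ℝ := fun n =>
    (1 : ℝ) / (Nat.fib (3 * (n + 1)) * ((1 + Real.sqrt 5) / 2) ^ (3 * (n + 1))) with ht_def
  set s : ℕ → ℝ := fun n =>
    (1 : ℝ) / (Nat.fib (6 * (n + 1) - 3) * Nat.fib (6 * (n + 1))) with hs_def
  have s5pos : (0:ℝ) < √5 := Real.sqrt_pos.mpr (by norm_num)
  have hppos : (0:ℝ) < (1 + √5)/2 := by positivity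
  -- summability of t
  have ht : Summable t := by
    refine Summable.of_nonneg_of_le (fun n => by positivity) (fun n => ?_)
      (summable_geometric_of_lt_one (by norm_num) (by norm_num : (1/2 : ℝ) < 1))
    have hF : (1:ℝ) ≤ Nat.fib (3 * (n + 1)) := by
      exact_mod_cast Nat.fib_pos.mpr (by omega)
    have hp2 : (2:ℝ) ≤ ((1 + √5)/2) ^ 3 := by
      rw [gold_cube']; nlinarith [s5pos]
    have hpow : (2:ℝ) ^ n ≤ ((1 + √5)/2) ^ (3 * (n + 1)) := by
      calc (2:ℝ) ^ n ≤ 2 ^ (n+1) := by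
              apply pow_le_pow_right₀ (by norm_num) (by omega)
        _ ≤ (((1 + √5)/2) ^ 3) ^ (n+1) := by
              apply pow_le_pow_left₀ (by norm_num) hp2
        _ = ((1 + √5)/2) ^ (3 * (n + 1)) := by rw [← pow_mul, Nat.mul_comm]
    have h1 : (1:ℝ) * 2 ^ n ≤
        Nat.fib (3 * (n + 1)) * ((1 + √5)/2) ^ (3 * (n + 1)) :=
      mul_le_mul hF hpow (by positivity) (by positivity)
    calc t n ≤ 1 / ((1:ℝ) * 2 ^ n) := by
          apply one_div_le_one_div_of_le (by positivity) h1
      _ = (1/2 : ℝ) ^ n := by rw [div_pow, one_pow, one_mul]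
  -- pairing identity
  have heq : ∀ k : ℕ, t (2*k) + t (2*k+1) = 2 * s k := by
    intro k
    have h := fib_gold_key k
    have e1 : 3 * (2*k + 1) = 6*k+3 := by ring
    have e2 : 3 * (2*k+1 + 1) = 6*k+6 := by ring
    have e3 : 6 * (k + 1) - 3 = 6*k+3 := by omega
    have e4 : 6 * (k + 1) = 6*k+6 := by ring
    simp only [ht_def, hs_def, e1, e2, e3, e4]
    exact h
  have hinj2 : Function.Injective (fun k : ℕ => 2*k) := fun a b h => by simp only [] at h; omega
  have hinj2' : Function.Injective (fun k : ℕ => 2*k+1) := fun a b h => by simp only [] at h; omega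
  have hte : Summable (fun k => t (2*k)) := ht.comp_injective hinj2
  have hto : Summable (fun k => t (2*k+1)) := ht.comp_injective hinj2'
  have hs : Summable s := by
    refine ((hte.add hto).div_const 2).congr fun k => ?_
    rw [heq k]; ring
  refine ⟨ht, hs, ?_⟩
  calc 2 * ∑' n, t n
      = 2 * ((∑' k, t (2*k)) + ∑' k, t (2*k+1)) := by
        rw [tsum_even_add_odd hte hto]
    _ = 2 * ∑' k, (t (2*k) + t (2*k+1)) := by rw [Summable.tsum_add hte hto]
    _ = 2 * ∑' k, 2 * s k := by rw [tsum_congr heq]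
    _ = 4 * ∑' k, s k := by rw [tsum_mul_left]; ring
end

section
/- The sum of the distances from √5 to the convergents of its continued fraction expansion [2; 4, 4, 4, …] satisfies Σ_{n=1}^{∞} |√5 − (F_{3n−1} + F_{3n+1})/F_{3n}| = 4·Σ_{n=1}^{∞} 1/(F_{6n−3}·F_{6n}); here the n-th convergent of √5 equals L_{3n}/F_{3n} = (F_{3n−1} + F_{3n+1})/F_{3n}, where L denotes the Lucas numbers. -/
open goldenRatio Real

private lemma hs5 : Real.sqrt 5 * Real.sqrt 5 = 5 := Real.mul_self_sqrt (by norm_num)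
private lemma hs5ne : Real.sqrt 5 ≠ 0 := by positivity

private lemma lucas_eq (m : ℕ) :
    ((Nat.fib m : ℝ) + Nat.fib (m+2)) = φ^(m+1) + ψ^(m+1) := by
  rw [Real.coe_fib_eq, Real.coe_fib_eq, ← add_div, div_eq_iff hs5ne,
    ← goldenRatio_sub_goldenConj, pow_add, pow_add, pow_add]
  linear_combination (φ^m - ψ^m) * goldenRatio_mul_goldenConj

private lemma diff_eq (m : ℕ) :
    Real.sqrt 5 - ((Nat.fib m : ℝ) + Nat.fib (m+2)) / Nat.fib (m+1)
      = (-2) * ψ^(m+1) / (Nat.fib (m+1) : ℝ) := by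
  have hF : (0:ℝ) < (Nat.fib (m+1) : ℝ) := by
    exact_mod_cast Nat.fib_pos.2 (Nat.succ_pos m)
  rw [lucas_eq, eq_div_iff hF.ne', sub_mul, div_mul_cancel₀ _ hF.ne',
    Real.coe_fib_eq, mul_comm (Real.sqrt 5), div_mul_cancel₀ _ hs5ne]
  ring

private lemma hcube : φ^3 - ψ^3 = 2 * Real.sqrt 5 := by
  have h := hs5
  show ((1 + Real.sqrt 5)/2)^3 - ((1 - Real.sqrt 5)/2)^3 = 2 * Real.sqrt 5
  linear_combination (Real.sqrt 5 / 4) * h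

private lemma pair_key (k : ℕ) :
    2 * |ψ|^(6*k+3) / (Nat.fib (6*k+3) : ℝ) + 2 * |ψ|^(6*k+6) / (Nat.fib (6*k+6) : ℝ)
      = 4 / ((Nat.fib (6*k+3) : ℝ) * (Nat.fib (6*k+6) : ℝ)) := by
  have ha : (0:ℝ) < (Nat.fib (6*k+3) : ℝ) := by
    exact_mod_cast Nat.fib_pos.2 (by omega)
  have hb : (0:ℝ) < (Nat.fib (6*k+6) : ℝ) := by
    exact_mod_cast Nat.fib_pos.2 (by omega)
  have habs1 : |ψ|^(6*k+3) = -ψ^(6*k+3) := by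
    rw [abs_of_neg goldenConj_neg, Odd.neg_pow ⟨3*k+1, by ring⟩]
  have habs2 : |ψ|^(6*k+6) = ψ^(6*k+6) := by
    rw [abs_of_neg goldenConj_neg, Even.neg_pow ⟨3*k+3, by ring⟩]
  have hXY : φ^(6*k+3) * ψ^(6*k+3) = -1 := by
    rw [← mul_pow, goldenRatio_mul_goldenConj, Odd.neg_one_pow ⟨3*k+1, by ring⟩]
  have hnum : 2*(-ψ^(6*k+3))*(φ^(6*k+6)-ψ^(6*k+6))
      + (φ^(6*k+3)-ψ^(6*k+3))*(2*ψ^(6*k+6)) = 4 * Real.sqrt 5 := by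
    have h6 : 6*k+6 = (6*k+3)+3 := by ring
    rw [h6, pow_add, pow_add]
    linear_combination 2 * hcube + (2*ψ^3 - 2*φ^3) * hXY
  rw [habs1, habs2, div_add_div _ _ ha.ne' hb.ne']
  congr 1
  rw [Real.coe_fib_eq (6*k+6), Real.coe_fib_eq (6*k+3),
    mul_div_assoc', div_mul_eq_mul_div, ← add_div, div_eq_iff hs5ne]
  linear_combination hnum

private lemma habs_lt : |goldenConj| < 1 :=
  abs_lt.2 ⟨neg_one_lt_goldenConj, goldenConj_neg.trans one_pos⟩

private noncomputable def fterm (n : ℕ) : ℝ := 2 * |ψ|^(3*n+3) / (Nat.fib (3*n+3) : ℝ)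

private lemma fterm_summable : Summable fterm := by
  have hg : Summable (fun n : ℕ => 2 * (|ψ|^3)^n) :=
    (summable_geometric_of_lt_one (by positivity)
      (pow_lt_one₀ (abs_nonneg _) habs_lt (by norm_num))).mul_left 2
  refine Summable.of_nonneg_of_le (fun n => by unfold fterm; positivity)
    (fun n => ?_) hg
  show 2 * |ψ|^(3*n+3) / (Nat.fib (3*n+3) : ℝ) ≤ 2 * (|ψ|^3)^n
  have hF1 : (1:ℝ) ≤ (Nat.fib (3*n+3) : ℝ) := by
    exact_mod_cast Nat.fib_pos.2 (by omega)
  calc 2 * |ψ|^(3*n+3) / (Nat.fib (3*n+3) : ℝ) ≤ 2 * |ψ|^(3*n+3) :=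
          div_le_self (by positivity) hF1
      _ = 2 * ((|ψ|^3)^(n+1)) := by rw [← pow_mul]; ring_nf
      _ ≤ 2 * (|ψ|^3)^n := by
          apply mul_le_mul_of_nonneg_left _ (by norm_num)
          exact pow_le_pow_of_le_one (by positivity)
            (pow_le_one₀ (abs_nonneg _) habs_lt.le) (by omega)

/-- The sum of the distances from `√5` to the convergents
`(F_{3n−1} + F_{3n+1})/F_{3n}` of its continued fraction `[2; 4, 4, 4, …]`
equals `4·Σ_{n=1}^∞ 1/(F_{6n−3}·F_{6n})`, where `Fₙ = Nat.fib n`. -/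
theorem sqrt_five_convergents_series :
    ∑' n : ℕ,
        |Real.sqrt 5 -
          ((Nat.fib (3 * (n + 1) - 1) : ℝ) + Nat.fib (3 * (n + 1) + 1)) /
            Nat.fib (3 * (n + 1))|
      = 4 * ∑' n : ℕ,
          (1 : ℝ) / (Nat.fib (6 * (n + 1) - 3) * Nat.fib (6 * (n + 1))) := by
  have hterm : ∀ n : ℕ,
      |Real.sqrt 5 -
          ((Nat.fib (3 * (n + 1) - 1) : ℝ) + Nat.fib (3 * (n + 1) + 1)) /
            Nat.fib (3 * (n + 1))| = fterm n := by
    intro n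
    have h1 : 3*(n+1)-1 = 3*n+2 := by omega
    have h2 : 3*(n+1)+1 = (3*n+2)+2 := by omega
    have h3 : 3*(n+1) = (3*n+2)+1 := by omega
    have h4 : (3*n+2)+1 = 3*n+3 := by omega
    have hF : (0:ℝ) ≤ (Nat.fib (3*n+3) : ℝ) := by positivity
    rw [h1, h2, h3, diff_eq (3*n+2), h4, abs_div, abs_mul, abs_pow,
      abs_of_nonneg hF, fterm]
    norm_num
  have he : Summable fun k => fterm (2*k) :=
    fterm_summable.comp_injective fun a b h => by omega
  have ho : Summable fun k => fterm (2*k+1) :=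
    fterm_summable.comp_injective fun a b h => by omega
  have hpair : ∀ k : ℕ, fterm (2*k) + fterm (2*k+1)
      = 4 * ((1:ℝ) / (Nat.fib (6*k+3) * Nat.fib (6*k+6))) := by
    intro k
    have e1 : 3*(2*k)+3 = 6*k+3 := by ring
    have e2 : 3*(2*k+1)+3 = 6*k+6 := by ring
    rw [fterm, fterm, e1, e2, pair_key k, mul_one_div]
  calc ∑' n, |Real.sqrt 5 -
          ((Nat.fib (3 * (n + 1) - 1) : ℝ) + Nat.fib (3 * (n + 1) + 1)) /
            Nat.fib (3 * (n + 1))|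
      = ∑' n, fterm n := tsum_congr hterm
    _ = (∑' k, fterm (2*k)) + ∑' k, fterm (2*k+1) := (tsum_even_add_odd he ho).symm
    _ = ∑' k, (fterm (2*k) + fterm (2*k+1)) := (Summable.tsum_add he ho).symm
    _ = ∑' k, 4 * ((1:ℝ) / (Nat.fib (6*k+3) * Nat.fib (6*k+6))) := tsum_congr hpair
    _ = 4 * ∑' k, (1:ℝ) / (Nat.fib (6*k+3) * Nat.fib (6*k+6)) := tsum_mul_left
    _ = 4 * ∑' n : ℕ, (1 : ℝ) / (Nat.fib (6 * (n + 1) - 3) * Nat.fib (6 * (n + 1))) := by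
        have : ∀ n : ℕ, (1:ℝ) / (Nat.fib (6*(n+1)-3) * Nat.fib (6*(n+1)))
            = (1:ℝ) / (Nat.fib (6*n+3) * Nat.fib (6*n+6)) := fun n => by
          rw [show 6*(n+1)-3 = 6*n+3 from by omega, show 6*(n+1) = 6*n+6 from by omega]
        rw [tsum_congr this]
end
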